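/- Let A be the explicit 7×7 integer matrix given in the context and let f₁, f₂, f₃, f₄ be the rational polynomials given in the context. For each i ∈ {1,2,3,4}: the matrix fᵢ(A) (a 7×7 matrix over ℚ) is invertible, the matrices Rᵢ′ = 9·fᵢ(A) and Sᵢ′ = 9·fᵢ(A)⁻¹·A have all entries in ℤ, and sgc₂(Rᵢ′, Sᵢ′) = 0 in ℤ/2ℤ. -/

import Mathlib

open Polynomial

/-- The sign-gyration polynomial `sgc₂` of a pair `(R, S)` of rectangular
integer matrices, with values in `ℤ/2ℤ`. -/
def sgc2 {n p : ℕ} (R : Matrix (Fin n) (Fin p) ℤ) (S : Matrix (Fin p) (Fin n) ℤ) : ZMod 2 :=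
  (((∑ i : Fin n, ∑ j : Fin n, ∑ k : Fin p, ∑ l : Fin p,
      if i < j ∧ l < k then R i k * S k i * R j l * S l j else 0)
    + (∑ i : Fin n, ∑ j : Fin n, ∑ k : Fin p, ∑ l : Fin p,
      if i < j ∧ l ≤ k then R i k * S k j * R j l * S l i else 0)
    + (∑ i : Fin n, ∑ k : Fin p, (R i k * (R i k - 1)) / 2 * (S k i) ^ 2) : ℤ) : ZMod 2)

def Amat : Matrix (Fin 7) (Fin 7) ℤ :=
  !![0,0,1,1,3,0,0; 1,0,0,0,3,0,0; 0,1,0,0,3,0,0; 0,0,1,0,3,0,0;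
     0,0,0,0,0,0,1; 1,1,1,1,10,0,0; 1,1,1,1,0,1,0]

/-- The matrix `A` viewed as a matrix over `ℚ`. -/
def AmatQ : Matrix (Fin 7) (Fin 7) ℚ := Amat.map (Int.cast : ℤ → ℚ)

noncomputable def f₁ : Polynomial ℚ := X

noncomputable def f₂ : Polynomial ℚ :=
  C (1/3 : ℚ) * (38 * X ^ 6 + 2 * X ^ 5 - X ^ 4 - 872 * X ^ 3
    - 1108 * X ^ 2 - 1309 * X - 713)

noncomputable def f₃ : Polynomial ℚ :=
  C (1/3 : ℚ) * (842 * X ^ 6 + 5072 * X ^ 5 - 6847 * X ^ 4 - 46061 * X ^ 3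
    - 34930 * X ^ 2 - 52216 * X + 2878)

noncomputable def f₄ : Polynomial ℚ :=
  C (1/3 : ℚ) * (4260971 * X ^ 6 - 3124108 * X ^ 5 + 2290532 * X ^ 4
    - 99681839 * X ^ 3 - 46221667 * X ^ 2 - 106722952 * X + 5811547)

def Apow2 : Matrix (Fin 7) (Fin 7) ℤ :=
  !![0, 1, 1, 0, 6, 0, 3;
     0, 0, 1, 1, 3, 0, 3;
     1, 0, 0, 0, 3, 0, 3;
     0, 1, 0, 0, 3, 0, 3;
     1, 1, 1, 1, 0, 1, 0;
     1, 1, 2, 1, 12, 0, 10;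
     2, 2, 3, 2, 22, 0, 0]

def Apow3 : Matrix (Fin 7) (Fin 7) ℤ :=
  !![4, 4, 3, 3, 6, 3, 6;
     3, 4, 4, 3, 6, 3, 3;
     3, 3, 4, 4, 3, 3, 3;
     4, 3, 3, 3, 3, 3, 3;
     2, 2, 3, 2, 22, 0, 0;
     11, 12, 12, 11, 15, 10, 12;
     2, 3, 4, 2, 27, 0, 22]

def Apow4 : Matrix (Fin 7) (Fin 7) ℤ :=
  !![13, 12, 16, 13, 72, 6, 6;
     10, 10, 12, 9, 72, 3, 6;
     9, 10, 13, 9, 72, 3, 3;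
     9, 9, 13, 10, 69, 3, 3;
     2, 3, 4, 2, 27, 0, 22;
     34, 34, 44, 33, 238, 12, 15;
     25, 26, 26, 24, 33, 22, 27]

def Apow5 : Matrix (Fin 7) (Fin 7) ℤ :=
  !![24, 28, 38, 25, 222, 6, 72;
     19, 21, 28, 19, 153, 6, 72;
     16, 19, 24, 15, 153, 3, 72;
     15, 19, 25, 15, 153, 3, 69;
     25, 26, 26, 24, 33, 22, 27;
     61, 71, 94, 61, 555, 15, 238;
     75, 75, 98, 74, 523, 27, 33]

def Apow6 : Matrix (Fin 7) (Fin 7) ℤ :=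
  !![106, 116, 127, 102, 405, 72, 222;
     99, 106, 116, 97, 321, 72, 153;
     94, 99, 106, 91, 252, 72, 153;
     91, 97, 102, 87, 252, 69, 153;
     75, 75, 98, 74, 523, 27, 33;
     324, 347, 375, 314, 1011, 238, 555;
     135, 158, 209, 135, 1236, 33, 523]

noncomputable def g1 : Polynomial ℤ := C 3 * X

def Gm1 : Matrix (Fin 7) (Fin 7) ℤ :=
  !![0, 0, 3, 3, 9, 0, 0;
     3, 0, 0, 0, 9, 0, 0;
     0, 3, 0, 0, 9, 0, 0;
     0, 0, 3, 0, 9, 0, 0;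
     0, 0, 0, 0, 0, 0, 3;
     3, 3, 3, 3, 30, 0, 0;
     3, 3, 3, 3, 0, 3, 0]

def Pm1 : Matrix (Fin 7) (Fin 7) ℤ :=
  !![9, 12, 9, 0, 0, -9, 0;
     9, 9, 12, 0, 0, -9, 0;
     9, 9, 9, 3, 0, -9, 0;
     3, 0, 0, -3, 0, 0, 0;
     -3, -3, -3, 0, 0, 3, 0;
     -30, -30, -30, 0, 0, 27, 3;
     0, 0, 0, 0, 3, 0, 0]

def Sm1 : Matrix (Fin 7) (Fin 7) ℤ :=
  !![9, 0, 0, 0, 0, 0, 0;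
     0, 9, 0, 0, 0, 0, 0;
     0, 0, 9, 0, 0, 0, 0;
     0, 0, 0, 9, 0, 0, 0;
     0, 0, 0, 0, 9, 0, 0;
     0, 0, 0, 0, 0, 9, 0;
     0, 0, 0, 0, 0, 0, 9]

def dv1 : ℤ := 3

noncomputable def g2 : Polynomial ℤ := 38 * X ^ 6 + 2 * X ^ 5 - X ^ 4 - 872 * X ^ 3 - 1108 * X ^ 2 - 1309 * X - 713

def Gm2 : Matrix (Fin 7) (Fin 7) ℤ :=
  !![-138, -144, -147, -12, -45, 126, 18;
     -135, -141, -144, -9, -51, 129, 12;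
     -129, -135, -138, -9, -57, 123, 15;
     -9, -9, -12, -3, -54, 9, 9;
     46, 47, 48, 6, 16, -38, -23;
     391, 413, 405, 12, -176, -371, 7;
     -14, -13, -9, -15, 61, -23, 16]

def Pm2 : Matrix (Fin 7) (Fin 7) ℤ :=
  !![-22365, 17577, -11691, 32193, -2430, -4536, 3321;
     33696, -26487, 17577, -48420, 3663, 6822, -5004;
     -42795, 33696, -22365, 61461, -4662, -8658, 6354;
     61461, -48420, 32193, -88362, 6696, 12447, -9126;
     -768, 606, -405, 1107, -84, -156, 114;
     -30414, 23961, -15930, 43722, -3315, -6159, 4515;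
     564, -447, 297, -810, 60, 114, -84]

def Sm2 : Matrix (Fin 7) (Fin 7) ℤ :=
  !![16362, -12906, 8613, -23580, 1782, 3321, -2430;
     -24669, 19395, -12906, 35514, -2682, -5004, 3663;
     31392, -24669, 16362, -45099, 3411, 6354, -4662;
     -45099, 35514, -23580, 64782, -4914, -9126, 6696;
     564, -447, 297, -810, 60, 114, -84;
     22317, -17574, 11664, -32058, 2427, 4515, -3315;
     -417, 327, -216, 594, -48, -84, 60]

def dv2 : ℤ := 9

noncomputable def g3 : Polynomial ℤ := 842 * X ^ 6 + 5072 * X ^ 5 - 6847 * X ^ 4 - 46061 * X ^ 3 - 34930 * X ^ 2 - 52216 * X + 2878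

def Gm3 : Matrix (Fin 7) (Fin 7) ℤ :=
  !![-59397, -61650, -35211, -66726, 331416, -88209, 129870;
     -79143, -54072, -61650, -56694, 15510, -67668, 209955;
     -74436, -79143, -59397, -93165, 95595, -82884, 230496;
     -93165, -56694, -66726, -54441, 116136, -85410, 215280;
     49204, 47429, 13887, 43290, -587591, 99388, -38120;
     -244415, -220390, -183558, -245988, 404401, -263420, 669709;
     108697, 75155, 153762, 110472, 1455310, -38120, -587591]

def Pm3 : Matrix (Fin 7) (Fin 7) ℤ :=
  !![-515980062, -549699444, -660118401, -505681749, -2858910363, -266658102, -873127674;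
     -429673464, -457754715, -549699444, -421094754, -2380704624, -222055056, -727080903;
     -403311816, -429673464, -515980062, -395262792, -2234657853, -208432755, -682477857;
     -395262792, -421094754, -505681749, -387375372, -2190054807, -204272118, -668855556;
     -296970204, -316378653, -379928592, -291042558, -1645435776, -153474267, -502525650;
     -1439661801, -1533751728, -1841830461, -1410925329, -7976798490, -744017745, -2436160701;
     -972378570, -1035928509, -1244012679, -952970121, -5387702691, -502525650, -1645435776]

def Sm3 : Matrix (Fin 7) (Fin 7) ℤ :=
  !![-1689485220, -1799904177, -2161447587, -1655765838, -9361019988, -873127674, -2858910363;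
     -1406890674, -1498835403, -1799904177, -1378809423, -7795217691, -727080903, -2380704624;
     -1320584076, -1406890674, -1689485220, -1294222428, -7317011952, -682477857, -2234657853;
     -1294222428, -1378809423, -1655765838, -1268390466, -7170965181, -668855556, -2190054807;
     -972378570, -1035928509, -1244012679, -952970121, -5387702691, -502525650, -1645435776;
     -4713930174, -5022008907, -6030765576, -4619840247, -26118685407, -2436160701, -7976798490;
     -3183889935, -3391974105, -4073310117, -3120339996, -17641126137, -1645435776, -5387702691]

def dv3 : ℤ := 9

noncomputable def g4 : Polynomial ℤ := 4260971 * X ^ 6 - 3124108 * X ^ 5 + 2290532 * X ^ 4 - 99681839 * X ^ 3 - 46221667 * X ^ 2 - 106722952 * X + 5811547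

def Gm4 : Matrix (Fin 7) (Fin 7) ℤ :=
  !![13545441, -10665027, 7085589, -19475211, 1469691, 2742939, -2013057;
     -20385072, 16046169, -10665027, 29303739, -2223420, -4128657, 3025461;
     25893150, -20385072, 13545441, -37225827, 2815098, 5243667, -3846135;
     -37225827, 29303739, -19475211, 53514207, -4056498, -7539246, 5526189;
     465844, -367732, 243294, -671019, 47722, 94174, -70121;
     18417256, -14503330, 9633027, -26482986, 1991248, 3729019, -2739557;
     -343679, 267347, -181122, 489897, -47099, -70121, 47722]

def Pm4 : Matrix (Fin 7) (Fin 7) ℤ :=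
  !![170938107, -122699133, -79051302, 69890931, 25670574, -10235403, -24795747;
     23409882, 174600153, -122699133, -159177636, -28962180, 27431046, -5745744;
     -209320731, 23409882, 170938107, 26243100, -9912177, -6573357, 31920705;
     26243100, -159177636, 69890931, 134459604, 27754272, -22712049, -2083698;
     8449116, 7228434, -11677050, -8265249, -986772, 1496553, -1388811;
     -25215249, 81782760, -25561152, -66455406, -14592594, 11102991, 2875767;
     7336176, -11569308, 291609, 8556858, 2171283, -1388811, -986772]

def Sm4 : Matrix (Fin 7) (Fin 7) ℤ :=
  !![-157730283, -114082452, 205797888, 135906957, 14881779, -24795747, 25670574;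
     196285455, -101013831, -114082452, 45095184, 22710258, -5745744, -28962180;
     48757230, 196285455, -157730283, -183973383, -31922496, 31920705, -9912177;
     -183973383, 45095184, 135906957, 1447353, -12872493, -2083698, 27754272;
     7336176, -11569308, 291609, 8556858, 2171283, -1388811, -986772;
     95761518, -11582394, -77691897, -11236491, 4682769, 2875767, -14592594;
     -13944891, -2083974, 13517451, 4960593, -42105, -986772, 2171283]

def dv4 : ℤ := 9

noncomputable abbrev phiM : Matrix (Fin 7) (Fin 7) ℤ →+* Matrix (Fin 7) (Fin 7) ℚ :=
  (Int.castRingHom ℚ).mapMatrix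

lemma pow_lemma : Amat ^ 2 = Apow2 ∧ Amat ^ 3 = Apow3 ∧ Amat ^ 4 = Apow4 ∧
    Amat ^ 5 = Apow5 ∧ Amat ^ 6 = Apow6 := by
  have h2 : Amat ^ 2 = Apow2 := by rw [sq]; decide
  have h3 : Amat ^ 3 = Apow3 := by rw [pow_succ, h2]; decide
  have h4 : Amat ^ 4 = Apow4 := by rw [pow_succ, h3]; decide
  have h5 : Amat ^ 5 = Apow5 := by rw [pow_succ, h4]; decide
  have h6 : Amat ^ 6 = Apow6 := by rw [pow_succ, h5]; decide
  exact ⟨h2, h3, h4, h5, h6⟩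

lemma helper (f : Polynomial ℚ) (g : Polynomial ℤ) (G P S' : Matrix (Fin 7) (Fin 7) ℤ)
    (d : ℤ) (hd : (d : ℚ) ≠ 0)
    (hf : f = C (1/3 : ℚ) * (g.map (algebraMap ℤ ℚ)))
    (hG : Polynomial.aeval Amat g = G)
    (hGP : G * P = ((3 * d : ℤ) : Matrix (Fin 7) (Fin 7) ℤ))
    (hPG : P * G = ((3 * d : ℤ) : Matrix (Fin 7) (Fin 7) ℤ))
    (hS : ∀ i j, 9 * (P * Amat) i j = d * S' i j)
    (hsgc : sgc2 ((3 : ℤ) • G) S' = 0) :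
    IsUnit (Polynomial.aeval AmatQ f) ∧
      ∃ (R' S' : Matrix (Fin 7) (Fin 7) ℤ),
        R'.map (Int.cast : ℤ → ℚ) = (9 : ℚ) • Polynomial.aeval AmatQ f ∧
        S'.map (Int.cast : ℤ → ℚ) = (9 : ℚ) • ((Polynomial.aeval AmatQ f)⁻¹ * AmatQ) ∧
        sgc2 R' S' = 0 := by
  have hAQ : AmatQ = phiM Amat := rfl
  have hmapg : Polynomial.aeval AmatQ (g.map (algebraMap ℤ ℚ)) = phiM G := by
    rw [aeval_map_algebraMap]
    have h := Polynomial.aeval_algHom_apply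
      (((Int.castRingHom ℚ).toIntAlgHom.mapMatrix :
        Matrix (Fin 7) (Fin 7) ℤ →ₐ[ℤ] Matrix (Fin 7) (Fin 7) ℚ)) Amat g
    simp only [AlgHom.mapMatrix_apply] at h
    rw [hG] at h
    exact h
  have hM : Polynomial.aeval AmatQ f = (1/3 : ℚ) • phiM G := by
    rw [hf, map_mul, aeval_C, hmapg, Algebra.algebraMap_eq_smul_one, smul_mul_assoc, one_mul]
  set N : Matrix (Fin 7) (Fin 7) ℚ := (d : ℚ)⁻¹ • phiM P with hN
  have hcast : ((3 * d : ℤ) : Matrix (Fin 7) (Fin 7) ℚ) = ((3 : ℚ) * d) • 1 := by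
    have h0 : ((3*d : ℤ) : Matrix (Fin 7) (Fin 7) ℚ) = ((3*d : ℤ) : ℚ) • 1 := by
      rw [Int.cast_smul_eq_zsmul, zsmul_one]
    rw [h0]
    norm_num
  have key1 : phiM G * phiM P = ((3 : ℚ) * d) • 1 := by
    rw [← map_mul, hGP, map_intCast, hcast]
  have key2 : phiM P * phiM G = ((3 : ℚ) * d) • 1 := by
    rw [← map_mul, hPG, map_intCast, hcast]
  have h1 : Polynomial.aeval AmatQ f * N = 1 := by
    rw [hM, hN, Matrix.smul_mul, Matrix.mul_smul, key1, smul_smul, smul_smul]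
    rw [show (1/3 : ℚ) * (d : ℚ)⁻¹ * ((3:ℚ) * d) = 1 by field_simp, one_smul]
  have h2 : N * Polynomial.aeval AmatQ f = 1 := by
    rw [hM, hN, Matrix.smul_mul, Matrix.mul_smul, key2, smul_smul, smul_smul]
    rw [show (d : ℚ)⁻¹ * (1/3 : ℚ) * ((3:ℚ) * d) = 1 by field_simp, one_smul]
  refine ⟨⟨⟨_, N, h1, h2⟩, rfl⟩, (3 : ℤ) • G, S', ?_, ?_, hsgc⟩
  · ext i j
    simp only [Matrix.map_apply, Matrix.smul_apply, hM, smul_eq_mul,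
      RingHom.mapMatrix_apply, Matrix.map_apply, Int.cast_mul, Int.coe_castRingHom]
    push_cast
    ring
  · have hinv : (Polynomial.aeval AmatQ f)⁻¹ = N := Matrix.inv_eq_right_inv h1
    rw [hinv, hN, Matrix.smul_mul, hAQ, ← map_mul]
    ext i j
    have h := hS i j
    simp only [Matrix.map_apply, Matrix.smul_apply, RingHom.mapMatrix_apply, smul_eq_mul]
    have h' : ((9 : ℤ) : ℚ) * ((P * Amat) i j : ℚ) = (d : ℚ) * (S' i j : ℚ) := by
      exact_mod_cast congrArg (Int.cast : ℤ → ℚ) h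
    push_cast at h' ⊢
    field_simp
    simp only [eq_intCast]
    linarith [h']

theorem sgc2_vanishes_on_unit_edges :
    ∀ f ∈ [f₁, f₂, f₃, f₄],
      IsUnit (Polynomial.aeval AmatQ f) ∧
      ∃ (R' S' : Matrix (Fin 7) (Fin 7) ℤ),
        R'.map (Int.cast : ℤ → ℚ) = (9 : ℚ) • Polynomial.aeval AmatQ f ∧
        S'.map (Int.cast : ℤ → ℚ) = (9 : ℚ) • ((Polynomial.aeval AmatQ f)⁻¹ * AmatQ) ∧
        sgc2 R' S' = 0 := by
  obtain ⟨h2, h3, h4, h5, h6⟩ := pow_lemma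
  intro f hf
  fin_cases hf
  · exact helper _ g1 Gm1 Pm1 Sm1 3 (by norm_num)
      (by rw [f₁, g1]
          simp only [Polynomial.map_mul, Polynomial.map_C, Polynomial.map_X]
          rw [← mul_assoc, ← C_mul]
          norm_num)
      (by simp only [g1, map_mul, aeval_C, aeval_X]; decide)
      (by decide) (by decide) (by decide) (by decide)
  · exact helper _ g2 Gm2 Pm2 Sm2 9 (by norm_num)
      (by simp [f₂, f₃, f₄, g2, Polynomial.map_add, Polynomial.map_sub, Polynomial.map_mul, Polynomial.map_pow, Polynomial.map_ofNat, Polynomial.map_X])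
      (by simp only [g2, map_add, map_sub, map_mul, map_pow, aeval_X, map_ofNat]; rw [h2, h3, h4, h5, h6]; decide)
      (by decide) (by decide) (by decide) (by decide)
  · exact helper _ g3 Gm3 Pm3 Sm3 9 (by norm_num)
      (by simp [f₂, f₃, f₄, g3, Polynomial.map_add, Polynomial.map_sub, Polynomial.map_mul, Polynomial.map_pow, Polynomial.map_ofNat, Polynomial.map_X])
      (by simp only [g3, map_add, map_sub, map_mul, map_pow, aeval_X, map_ofNat]; rw [h2, h3, h4, h5, h6]; decide)
      (by decide) (by decide) (by decide) (by decide)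
  · exact helper _ g4 Gm4 Pm4 Sm4 9 (by norm_num)
      (by simp [f₂, f₃, f₄, g4, Polynomial.map_add, Polynomial.map_sub, Polynomial.map_mul, Polynomial.map_pow, Polynomial.map_ofNat, Polynomial.map_X])
      (by simp only [g4, map_add, map_sub, map_mul, map_pow, aeval_X, map_ofNat]; rw [h2, h3, h4, h5, h6]; decide)
      (by decide) (by decide) (by decide) (by decide)
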